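/- Define the Lebesgue bracket ⟨v,I⟩ = √(1 + |v|²/2 + I/m) for v ∈ ℝ³, I ≥ 0, m > 0, and E = (m/4)|v−v*|² + I + I*. Then (E/m)^{ζ/2} ≤ ⟨v,I⟩^ζ + ⟨v*,I*⟩^ζ for every ζ ∈ (0,2]. -/

import Mathlib

lemma real_rpow_add_le_add_rpow {a b p : ℝ} (ha : 0 ≤ a) (hb : 0 ≤ b)
    (hp : 0 ≤ p) (hp1 : p ≤ 1) : (a + b) ^ p ≤ a ^ p + b ^ p := by
  have h := NNReal.coe_le_coe.2 (NNReal.rpow_add_le_add_rpow ⟨a, ha⟩ ⟨b, hb⟩ hp hp1)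
  exact h

theorem energy_upper_bound
    (m : ℝ) (hm : 0 < m)
    (v vs : EuclideanSpace ℝ (Fin 3)) (I Is : ℝ) (hI : 0 ≤ I) (hIs : 0 ≤ Is)
    (ζ : ℝ) (hζ : ζ ∈ Set.Ioc (0:ℝ) 2)
    (E : ℝ) (hE : E = m / 4 * ‖v - vs‖ ^ 2 + I + Is) :
    (E / m) ^ (ζ / 2) ≤
      Real.sqrt (1 + ‖v‖ ^ 2 / 2 + I / m) ^ ζ
        + Real.sqrt (1 + ‖vs‖ ^ 2 / 2 + Is / m) ^ ζ := by
  obtain ⟨hζ0, hζ2⟩ := hζ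
  set a : ℝ := 1 + ‖v‖ ^ 2 / 2 + I / m with ha_def
  set b : ℝ := 1 + ‖vs‖ ^ 2 / 2 + Is / m with hb_def
  have ha : 0 ≤ a := by positivity
  have hb : 0 ≤ b := by positivity
  have hsa : Real.sqrt a ^ ζ = a ^ (ζ / 2) := by
    rw [Real.sqrt_eq_rpow, ← Real.rpow_mul ha, one_div]
    ring_nf
  have hsb : Real.sqrt b ^ ζ = b ^ (ζ / 2) := by
    rw [Real.sqrt_eq_rpow, ← Real.rpow_mul hb, one_div]
    ring_nf
  rw [hsa, hsb]
  have hnorm : ‖v - vs‖ ^ 2 ≤ 2 * ‖v‖ ^ 2 + 2 * ‖vs‖ ^ 2 := by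
    have h1 : ‖v - vs‖ ≤ ‖v‖ + ‖vs‖ := norm_sub_le v vs
    have h2 := pow_le_pow_left₀ (norm_nonneg (v - vs)) h1 2
    nlinarith [h2, sq_nonneg (‖v‖ - ‖vs‖)]
  have hEm : E / m ≤ a + b := by
    have heq : E / m = ‖v - vs‖ ^ 2 / 4 + I / m + Is / m := by
      rw [hE]; field_simp
    rw [heq, ha_def, hb_def]
    linarith [hnorm]
  have hEm0 : 0 ≤ E / m := by
    rw [hE]
    positivity
  calc (E / m) ^ (ζ / 2) ≤ (a + b) ^ (ζ / 2) :=
        Real.rpow_le_rpow hEm0 hEm (by linarith)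
    _ ≤ a ^ (ζ / 2) + b ^ (ζ / 2) :=
        real_rpow_add_le_add_rpow ha hb (by linarith) (by linarith)
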